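/- Let k be a field and E a finite set. Then a pair (V, W) of subspaces of k^E is a presentation on E if and only if W is the orthogonal complement of V (with respect to the bilinear form (v, w) ↦ Σ_{e ∈ E} v(e)w(e)). -/

import Mathlib

open Function Set

noncomputable section

variable {α k : Type*} [Field k]

/-- Axiom (O2) for a pair of families of subsets of the ground set `E`. -/
def AxO2 (E : Set α) (𝒞 𝒟 : Set (Set α)) : Prop :=
  ∀ P Q : Set α, ∀ e : α, Disjoint P Q → e ∉ P → e ∉ Q → P ∪ Q ∪ {e} = E →
    (∃ C ∈ 𝒞, e ∈ C ∧ C ⊆ P ∪ {e}) ∨ (∃ D ∈ 𝒟, e ∈ D ∧ D ⊆ Q ∪ {e})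

/-- Two vectors are orthogonal: supports intersect finitely and the sum of products is zero. -/
def Orthog (v w : α → k) : Prop :=
  (support v ∩ support w).Finite ∧ ∑ᶠ e, v e * w e = 0

/-- The subspace of `k^α` of functions supported in `E` (the formal meaning of `k^E`). -/
def FunOn (E : Set α) : Submodule k (α → k) where
  carrier := {v | support v ⊆ E}
  add_mem' hf hg := (support_add _ _).trans (union_subset hf hg)
  zero_mem' := by simp
  smul_mem' c f hf := (support_const_smul_subset c f).trans hf

/-- The set `S(V)` of supports of elements of `V`. -/
def suppSet (V : Submodule k (α → k)) : Set (Set α) := support '' (V : Set (α → k))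

/-- A presentation on the ground set `E` over `k`: a pair of orthogonal subspaces of `k^E`
whose families of supports satisfy (O2). -/
def IsPresentationOn (E : Set α) (V W : Submodule k (α → k)) : Prop :=
  V ≤ FunOn E ∧ W ≤ FunOn E ∧ (∀ v ∈ V, ∀ w ∈ W, Orthog v w) ∧
    AxO2 E (suppSet V) (suppSet W)

/-- Minimal nonempty elements of a family of sets. -/
def MinNE (𝒜 : Set (Set α)) (o : Set α) : Prop :=
  o ∈ 𝒜 ∧ o.Nonempty ∧ ∀ o' ∈ 𝒜, o'.Nonempty → o' ⊆ o → o' = o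

/-- A circuit of a matroid: a minimal dependent set. -/
def MatCircuit (M : Matroid α) (C : Set α) : Prop := Minimal M.Dep C

/-- The pair `(V, W)` presents the matroid `M` on ground set `E`. -/
def Presents (E : Set α) (V W : Submodule k (α → k)) (M : Matroid α) : Prop :=
  M.E = E ∧ (∀ C, MatCircuit M C ↔ MinNE (suppSet V) C) ∧
    (∀ D, MatCircuit M✶ D ↔ MinNE (suppSet W) D)

/-- Restriction of a vector to `X`, as a linear endomap of `k^α` (zeroing outside `X`). -/
def indLM (X : Set α) : (α → k) →ₗ[k] (α → k) where
  toFun v := X.indicator v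
  map_add' f g := by
    funext a
    by_cases h : a ∈ X <;> simp [Set.indicator_of_mem, Set.indicator_of_notMem, h]
  map_smul' c f := by
    funext a
    by_cases h : a ∈ X <;> simp [Set.indicator_of_mem, Set.indicator_of_notMem, h]

/-- Contraction `V.X` of a subspace to `X`. -/
def conV (V : Submodule k (α → k)) (X : Set α) : Submodule k (α → k) :=
  Submodule.map (indLM X) V

/-- Restriction of a pair `(V,W)` to the ground set `X`: `(V↾X, W.X)`. -/
def pairRes (Pr : Submodule k (α → k) × Submodule k (α → k)) (X : Set α) :
    Submodule k (α → k) × Submodule k (α → k) :=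
  (Pr.1 ⊓ FunOn X, conV Pr.2 X)

/-- Contraction of a pair `(V,W)` to the ground set `X`: `(V.X, W↾X)`. -/
def pairCon (Pr : Submodule k (α → k) × Submodule k (α → k)) (X : Set α) :
    Submodule k (α → k) × Submodule k (α → k) :=
  (conV Pr.1 X, Pr.2 ⊓ FunOn X)

/-- A set `I` is `Π`-independent (w.r.t. the vector subspace `V`): it includes no
nonempty support of a vector. -/
def PresIndep (V : Submodule k (α → k)) (I : Set α) : Prop :=
  ∀ v ∈ V, support v ⊆ I → v = 0

end


section AuxProof

open Function Set Module

variable {α k : Type*} [Field k]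

private lemma aux_finsum_eq_sum {E : Set α} (hE : E.Finite) [Fintype ↥E] (g : α → k)
    (hg : Function.support g ⊆ E) : ∑ᶠ a, g a = ∑ i : ↥E, g ↑i := by
  classical
  rw [finsum_eq_sum_of_support_subset g (s := hE.toFinset) (by simpa using hg)]
  exact Finset.sum_subtype hE.toFinset (fun x => hE.mem_toFinset) g

private lemma aux_li {ι n : Type*} (g : ι → n → k) (emb : ι → n)
    (h1 : ∀ i, g i (emb i) ≠ 0) (h2 : ∀ i j, i ≠ j → g i (emb j) = 0) :
    LinearIndependent k g := by
  rw [linearIndependent_iff']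
  intro s c hsum i hi
  have h := congrFun hsum (emb i)
  simp only [Finset.sum_apply, Pi.smul_apply, smul_eq_mul, Pi.zero_apply] at h
  rw [Finset.sum_eq_single i (fun j _ hj => by rw [h2 j i hj, mul_zero])
    (fun h' => absurd hi h')] at h
  exact (mul_eq_zero.mp h).resolve_right (h1 i)

private lemma aux_sum_single {n : Type*} [Fintype n] [DecidableEq n] (x : n → k) :
    ∑ q, x q • (Pi.single q 1 : n → k) = x := by
  funext j
  rw [Finset.sum_apply]
  simp [Pi.single_apply]

private lemma aux_orth_finrank {n : Type*} [Fintype n] (V' : Submodule k (n → k)) :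
    ∃ X : Submodule k (n → k),
      (∀ y, y ∈ X ↔ ∀ x ∈ V', ∑ i, x i * y i = 0) ∧
      Module.finrank k V' + Module.finrank k X = Fintype.card n := by
  classical
  let L : (n → k) →ₗ[k] Module.Dual k V' :=
    { toFun := fun y =>
        { toFun := fun x => ∑ i, (x : n → k) i * y i
          map_add' := by intro a b; simp [add_mul, Finset.sum_add_distrib]
          map_smul' := by intro c a; simp [Finset.mul_sum, mul_assoc] }
      map_add' := by
        intro a b; apply LinearMap.ext; intro x
        simp [mul_add, Finset.sum_add_distrib]
      map_smul' := by
        intro c a; apply LinearMap.ext; intro x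
        simp [Finset.mul_sum, mul_left_comm] }
  have hLsurj : Function.Surjective L := by
    intro g
    obtain ⟨G, hG⟩ := LinearMap.exists_extend g
    refine ⟨fun i => G (Pi.single i 1 : n → k), ?_⟩
    apply LinearMap.ext; intro x
    have hx : (x : n → k) = ∑ q, (x : n → k) q • (Pi.single q 1 : n → k) :=
      (aux_sum_single _).symm
    have : G (x : n → k) = ∑ i, (x : n → k) i * G (Pi.single i 1 : n → k) := by
      conv_lhs => rw [hx]
      rw [map_sum]
      simp [smul_eq_mul]
    have hGx : G (x : n → k) = g x := by
      rw [← hG]; rfl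
    simp only [L, LinearMap.coe_mk, AddHom.coe_mk]
    rw [← this, hGx]
  refine ⟨LinearMap.ker L, ?_, ?_⟩
  · intro y
    constructor
    · intro hy x hx
      have := LinearMap.congr_fun (LinearMap.mem_ker.mp hy) ⟨x, hx⟩
      simpa [L] using this
    · intro h
      rw [LinearMap.mem_ker]
      apply LinearMap.ext; intro x
      simpa [L] using h x x.2
  · have h1 := LinearMap.finrank_range_add_finrank_ker L
    have h2 : LinearMap.range L = ⊤ := LinearMap.range_eq_top.mpr hLsurj
    rw [h2, finrank_top] at h1
    rw [Subspace.dual_finrank_eq] at h1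
    rw [← Module.finrank_pi (R := k) (ι := n)]
    exact h1

end AuxProof

/-- For a finite ground set `E`, a pair `(V, W)` of subspaces of `k^E`
is a presentation on `E` if and only if `W` is the orthogonal complement of `V` in `k^E`
with respect to the bilinear form `(v, w) ↦ ∑ e, v e * w e`. -/
theorem finite_presentation_iff_orthogonal_complement {α k : Type*} [Field k]
    (E : Set α) (hE : E.Finite) (V W : Submodule k (α → k))
    (hV : V ≤ FunOn E) (hW : W ≤ FunOn E) :
    IsPresentationOn E V W ↔
      (W : Set (α → k)) = {w | Function.support w ⊆ E ∧ ∀ v ∈ V, ∑ᶠ e, v e * w e = 0} := by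
  classical
  haveI : Fintype ↥E := hE.fintype
  constructor
  · rintro ⟨-, -, horth, hO2⟩
    apply Set.Subset.antisymm
    · rintro w hw
      exact ⟨hW hw, fun v hv => (horth v hv w hw).2⟩
    · -- the hard inclusion
      set r : (α → k) →ₗ[k] (↥E → k) := LinearMap.funLeft k k Subtype.val with hr
      set S : Set (Set α) := {B | B ⊆ E ∧ ∀ v ∈ V, Function.support v ⊆ B → v = 0} with hS
      have hSfin : S.Finite := hE.finite_subsets.subset (fun B hB => hB.1)
      have hSne : S.Nonempty := ⟨∅, Set.empty_subset _, fun v _ hsupp => by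
        rwa [Set.subset_empty_iff, Function.support_eq_empty_iff] at hsupp⟩
      obtain ⟨B, hBS, hBmax'⟩ := Set.Finite.exists_maximalFor id S hSfin hSne
      have hBmax : ∀ B' ∈ S, id B ⊆ id B' → id B = id B' := fun B' hB' h => le_antisymm h (hBmax' hB' h)
      obtain ⟨hBE, hBind⟩ := hBS
      have hvex : ∀ e : ↥(E \ B), ∃ v, v ∈ V ∧
          Function.support v ⊆ B ∪ {(e : α)} ∧ v (e : α) ≠ 0 := by
        rintro ⟨e, heE, heB⟩
        have hne : B ∪ {e} ≠ B := fun h => heB (h ▸ (Set.mem_union_right _ rfl))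
        have hnotS : ¬ (∀ v ∈ V, Function.support v ⊆ B ∪ {e} → v = 0) := by
          intro hind
          exact hne (hBmax (B ∪ {e})
            ⟨Set.union_subset hBE (by simpa using heE), hind⟩ Set.subset_union_left).symm
        push_neg at hnotS
        obtain ⟨v, hvV, hvsupp, hvne⟩ := hnotS
        refine ⟨v, hvV, hvsupp, fun hve => hvne (hBind v hvV ?_)⟩
        intro a ha
        rcases hvsupp ha with h | h
        · exact h
        · rw [Set.mem_singleton_iff] at h; subst h; exact absurd hve ha
      choose vf hvfV hvfsupp hvfne using hvex
      have hwex : ∀ b : ↥B, ∃ w, w ∈ W ∧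
          Function.support w ⊆ (E \ B) ∪ {(b : α)} ∧ w (b : α) ≠ 0 := by
        rintro ⟨b, hbB⟩
        have hbE : b ∈ E := hBE hbB
        have hun : (B \ {b}) ∪ (E \ B) ∪ {b} = E := by
          ext a
          simp only [Set.mem_union, Set.mem_diff, Set.mem_singleton_iff]
          constructor
          · rintro ((⟨h, -⟩ | ⟨h, -⟩) | rfl)
            · exact hBE h
            · exact h
            · exact hbE
          · intro haE
            by_cases hab : a = b
            · exact Or.inr hab
            · by_cases haB : a ∈ B
              · exact Or.inl (Or.inl ⟨haB, hab⟩)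
              · exact Or.inl (Or.inr ⟨haE, haB⟩)
        have := hO2 (B \ {b}) (E \ B) b
          (Set.disjoint_left.mpr fun a ha h2 => h2.2 ha.1)
          (fun h => h.2 rfl) (fun h => h.2 hbB) hun
        rcases this with ⟨C, ⟨v, hvV, rfl⟩, hbC, hCsub⟩ | ⟨D, ⟨w, hwW, rfl⟩, hbD, hDsub⟩
        · exfalso
          have hsub : Function.support v ⊆ B := by
            intro a ha
            rcases hCsub ha with h | h
            · exact h.1
            · rw [Set.mem_singleton_iff] at h; subst h; exact hbB
          have := hBind v hvV hsub
          rw [this] at hbC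
          simp at hbC
        · exact ⟨w, hwW, hDsub, hbD⟩
      choose wf hwfW hwfsupp hwfne using hwex
      haveI : Fintype ↥(E \ B) := (hE.subset Set.diff_subset).fintype
      haveI : Fintype ↥B := (hE.subset hBE).fintype
      haveI : Module.Finite k (↥E → k) := Module.Finite.pi
      set V' : Submodule k (↥E → k) := V.map r with hV'
      set W' : Submodule k (↥E → k) := W.map r with hW'
      haveI : Module.Finite k ↥V' := FiniteDimensional.finiteDimensional_submodule V'
      haveI : Module.Finite k ↥W' := FiniteDimensional.finiteDimensional_submodule W'
      -- linear independence for V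
      have hliV : LinearIndependent k (fun e : ↥(E \ B) => r (vf e)) := by
        apply aux_li _ (fun e : ↥(E \ B) => (⟨e.1, e.2.1⟩ : ↥E))
        · exact fun e => hvfne e
        · intro i j hij
          show vf i (j : α) = 0
          by_contra h
          rcases hvfsupp i h with hB | he
          · exact j.2.2 hB
          · rw [Set.mem_singleton_iff] at he
            exact hij (Subtype.ext he.symm)
      have hliW : LinearIndependent k (fun b : ↥B => r (wf b)) := by
        apply aux_li _ (fun b : ↥B => (⟨b.1, hBE b.2⟩ : ↥E))
        · exact fun b => hwfne b
        · intro i j hij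
          show wf i (j : α) = 0
          by_contra h
          rcases hwfsupp i h with hD | he
          · exact hD.2 j.2
          · rw [Set.mem_singleton_iff] at he
            exact hij (Subtype.ext he.symm)
      have hcard1 : Fintype.card ↥(E \ B) ≤ Module.finrank k V' := by
        have hmem : ∀ e, r (vf e) ∈ V' := fun e => Submodule.mem_map_of_mem (hvfV e)
        have h : LinearIndependent k (fun e : ↥(E \ B) => (⟨r (vf e), hmem e⟩ : V')) :=
          LinearIndependent.of_comp V'.subtype hliV
        exact h.fintype_card_le_finrank
      have hcard2 : Fintype.card ↥B ≤ Module.finrank k W' := by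
        have hmem : ∀ b, r (wf b) ∈ W' := fun b => Submodule.mem_map_of_mem (hwfW b)
        have h : LinearIndependent k (fun b : ↥B => (⟨r (wf b), hmem b⟩ : W')) :=
          LinearIndependent.of_comp W'.subtype hliW
        exact h.fintype_card_le_finrank
      have hcardsum : Fintype.card ↥(E \ B) + Fintype.card ↥B = Fintype.card ↥E := by
        have hc : ∀ (s : Set α) (_ : Fintype ↥s), Fintype.card ↥s = s.ncard := by
          intro s inst
          rw [← Nat.card_eq_fintype_card, Nat.card_coe_set_eq]
        rw [hc _ inferInstance, hc _ inferInstance, hc _ inferInstance]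
        exact Set.ncard_diff_add_ncard_of_subset hBE hE
      obtain ⟨X, hXmem, hXrank⟩ := aux_orth_finrank (n := ↥E) V'
      have hWX : W' ≤ X := by
        intro y hy
        obtain ⟨w, hwW, rfl⟩ := Submodule.mem_map.mp hy
        refine (hXmem _).mpr ?_
        rintro x hx
        obtain ⟨v, hvV, rfl⟩ := Submodule.mem_map.mp hx
        have hsupp : Function.support (fun a => v a * w a) ⊆ E := by
          intro a ha
          exact hV hvV (fun h => ha (by simp [h]))
        have : ∑ i : ↥E, r v i * r w i = ∑ i : ↥E, v ↑i * w ↑i := rfl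
        rw [this, ← aux_finsum_eq_sum hE _ hsupp]
        exact (horth v hvV w hwW).2
      have hfr : Module.finrank k X ≤ Module.finrank k W' := by omega
      have hW'X : W' = X := Submodule.eq_of_le_of_finrank_le hWX hfr
      rintro u ⟨huE, huorth⟩
      have hru : r u ∈ X := by
        refine (hXmem _).mpr ?_
        rintro x hx
        obtain ⟨v, hvV, rfl⟩ := Submodule.mem_map.mp hx
        have hsupp : Function.support (fun a => v a * u a) ⊆ E := by
          intro a ha
          exact hV hvV (fun h => ha (by simp [h]))
        have : ∑ i : ↥E, r v i * r u i = ∑ i : ↥E, v ↑i * u ↑i := rfl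
        rw [this, ← aux_finsum_eq_sum hE _ hsupp]
        exact huorth v hvV
      rw [← hW'X] at hru
      obtain ⟨w, hwW, hwu⟩ := Submodule.mem_map.mp hru
      have heq : w = u := by
        funext a
        by_cases haE : a ∈ E
        · exact congrFun hwu ⟨a, haE⟩
        · have h1 : w a = 0 := by
            by_contra h
            exact haE (hW hwW h)
          have h2 : u a = 0 := by
            by_contra h
            exact haE (huE h)
          rw [h1, h2]
      rw [← heq]
      exact hwW
  · intro hWeq
    refine ⟨hV, hW, ?_, ?_⟩
    · intro v hv w hw
      have hw' : w ∈ {w : α → k | Function.support w ⊆ E ∧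
          ∀ v ∈ V, ∑ᶠ e, v e * w e = 0} := hWeq ▸ hw
      exact ⟨hE.subset (Set.inter_subset_left.trans (hV hv)), hw'.2 v hv⟩
    · intro P Q e hPQ heP heQ hun
      by_cases hcase : ∃ C ∈ suppSet V, e ∈ C ∧ C ⊆ P ∪ {e}
      · exact Or.inl hcase
      push_neg at hcase
      right
      have hQE : Q ⊆ E := by rw [← hun]; exact fun a ha => Or.inl (Or.inr ha)
      have heE : e ∈ E := by rw [← hun]; exact Or.inr rfl
      have hQfin : Q.Finite := hE.subset hQE
      haveI : Fintype ↥Q := hQfin.fintype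
      have key : ∀ v ∈ V, (∀ q : ↥Q, v ↑q = 0) → v e = 0 := by
        intro v hv hq
        by_contra hve
        refine hcase (Function.support v) ⟨v, hv, rfl⟩ hve ?_
        intro a ha
        have haE : a ∈ E := hV hv ha
        rw [← hun] at haE
        rcases haE with (hP | hQa) | hae
        · exact Or.inl hP
        · exact absurd (hq ⟨a, hQa⟩) ha
        · exact Or.inr hae
      let ρV : V →ₗ[k] (↥Q → k) :=
        (LinearMap.funLeft k k (Subtype.val : ↥Q → α)).comp V.subtype
      let gV : V →ₗ[k] k := (LinearMap.proj e).comp V.subtype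
      have hker : LinearMap.ker ρV ≤ LinearMap.ker gV := by
        intro v hv
        rw [LinearMap.mem_ker] at hv ⊢
        exact key v.1 v.2 (fun q => congrFun hv q)
      obtain ⟨f, hf⟩ := LinearMap.exists_extend
        ((Submodule.liftQ (LinearMap.ker ρV) gV hker).comp
          (ρV.quotKerEquivRange).symm.toLinearMap)
      have hfρ : ∀ v : V, f (ρV v) = gV v := by
        intro v
        have h0 : f (ρV v) =
            ((Submodule.liftQ (LinearMap.ker ρV) gV hker).comp
              (ρV.quotKerEquivRange).symm.toLinearMap)
            ⟨ρV v, LinearMap.mem_range_self _ v⟩ := by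
          rw [← hf]; rfl
        rw [h0]
        show (Submodule.liftQ (LinearMap.ker ρV) gV hker)
          ((ρV.quotKerEquivRange).symm ⟨ρV v, LinearMap.mem_range_self _ v⟩) = gV v
        rw [LinearMap.quotKerEquivRange_symm_apply_image]
        exact Submodule.liftQ_apply _ gV v
      set w : α → k := fun a =>
        if a = e then 1 else
          if h : a ∈ Q then -f (Pi.single (⟨a, h⟩ : ↥Q) 1 : ↥Q → k) else 0 with hwdef
      have hwe : w e = 1 := if_pos rfl
      have hwsupp : Function.support w ⊆ Q ∪ {e} := by
        intro a ha
        by_cases hae : a = e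
        · exact Or.inr hae
        · by_cases haQ : a ∈ Q
          · exact Or.inl haQ
          · exfalso; apply ha; simp [hwdef, hae, haQ]
      have hwq : ∀ (a : α) (h : a ∈ Q),
          w a = -f (Pi.single (⟨a, h⟩ : ↥Q) 1 : ↥Q → k) := by
        intro a h
        have hae : a ≠ e := fun hh => heQ (hh ▸ h)
        simp [hwdef, hae, h]
      have hwW : w ∈ W := by
        rw [← SetLike.mem_coe, hWeq]
        refine ⟨hwsupp.trans (Set.union_subset hQE (by simpa using heE)), ?_⟩
        intro v hv
        have hsub : Function.support (fun a => v a * w a) ⊆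
            ↑(insert e hQfin.toFinset) := by
          intro a ha
          have haw : a ∈ Function.support w := fun h => ha (by simp [h])
          rcases hwsupp haw with h | h
          · simp [hQfin.mem_toFinset, h]
          · rw [Set.mem_singleton_iff] at h
            simp [h]
        rw [finsum_eq_sum_of_support_subset _ hsub,
          Finset.sum_insert (by simp [hQfin.mem_toFinset, heQ]), hwe, mul_one,
          Finset.sum_subtype hQfin.toFinset (fun x => hQfin.mem_toFinset)
            (fun a => v a * w a)]
        have hstep : ∑ q : ↥Q, v ↑q * w ↑q = -f (fun q : ↥Q => v ↑q) := by
          have h1 : ∀ q : ↥Q, v ↑q * w ↑q =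
              -(v ↑q • f (Pi.single q 1 : ↥Q → k)) := by
            intro q
            rw [hwq q.1 q.2, Subtype.coe_eta]
            rw [smul_eq_mul, mul_neg]
          rw [Finset.sum_congr rfl (fun q _ => h1 q), Finset.sum_neg_distrib]
          congr 1
          have h2 : ∀ q : ↥Q, v ↑q • f (Pi.single q 1 : ↥Q → k) =
              f (v ↑q • (Pi.single q 1 : ↥Q → k)) := fun q => (map_smul f _ _).symm
          rw [Finset.sum_congr rfl (fun q _ => h2 q), ← map_sum]
          congr 1
          exact aux_sum_single (fun q : ↥Q => v ↑q)
        rw [hstep]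
        have hval : f (fun q : ↥Q => v ↑q) = v e := hfρ ⟨v, hv⟩
        rw [hval]
        ring
      refine ⟨Function.support w, ⟨w, hwW, rfl⟩, ?_, hwsupp⟩
      rw [Function.mem_support, hwe]
      exact one_ne_zero
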